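/- Let (X,Y) be a pair of random variables with X binary, and (X₁,Y₁),(X₂,Y₂) two independent copies. Set U₁ = X₁ ⊕ X₂, U₂ = X₂. Then H(U₁ | Y₁,Y₂) = H(X|Y) holds if and only if H(X|Y) ∈ {0,1}, and the same equivalence holds for H(U₂ | Y₁,Y₂,U₁) = H(X|Y). -/

import Mathlib

/-- Conditional Shannon entropy (base 2) of a joint pmf `q x y`. -/
noncomputable def condEnt {α β : Type*} [Fintype α] (q : α → β → ℝ) : ℝ :=
  ∑' y : β, ∑ x : α, -(q x y * Real.logb 2 (q x y / ∑ x' : α, q x' y))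

namespace PolarAux


noncomputable def phi (x : ℝ) : ℝ := x * Real.logb 2 x

lemma phi_zero : phi 0 = 0 := by simp [phi]

lemma phi_two : phi 2 = 2 := by
  simp [phi, Real.logb_self_eq_one]

lemma phi_mul {x y : ℝ} (hx : 0 ≤ x) (hy : 0 ≤ y) :
    phi (x * y) = x * phi y + y * phi x := by
  rcases eq_or_lt_of_le hx with h | hx
  · simp [phi, ← h]
  rcases eq_or_lt_of_le hy with h | hy
  · simp [phi, ← h]
  unfold phi
  rw [Real.logb, Real.logb, Real.logb, Real.log_mul hx.ne' hy.ne']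
  ring

lemma phi_scvx : StrictConvexOn ℝ (Set.Ici (0:ℝ)) phi := by
  refine ⟨convex_Ici 0, fun x hx y hy hxy a b ha hb hab => ?_⟩
  have h := Real.strictConvexOn_mul_log.2 hx hy hxy ha hb hab
  have hl : (0:ℝ) < Real.log 2 := Real.log_pos one_lt_two
  simp only [smul_eq_mul] at h ⊢
  unfold phi
  rw [Real.logb, Real.logb, Real.logb]
  have e1 : (a*x+b*y) * (Real.log (a*x+b*y) / Real.log 2)
      = ((a*x+b*y) * Real.log (a*x+b*y)) / Real.log 2 := by ring
  have e2 : a * (x * (Real.log x / Real.log 2)) + b * (y * (Real.log y / Real.log 2))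
      = (a*(x*Real.log x) + b*(y*Real.log y)) / Real.log 2 := by ring
  rw [e1, e2]
  gcongr

noncomputable def T (a b : ℝ) : ℝ := phi (a + b) - phi a - phi b

lemma T_comm (a b : ℝ) : T a b = T b a := by unfold T; rw [add_comm]; ring

lemma T_zero_right (a : ℝ) : T a 0 = 0 := by simp [T, phi_zero]

lemma T_zero_left (b : ℝ) : T 0 b = 0 := by simp [T, phi_zero]

lemma T_self {a : ℝ} (ha : 0 ≤ a) : T a a = 2 * a := by
  unfold T
  have : a + a = 2 * a := by ring
  rw [this, phi_mul (by norm_num) ha, phi_two]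
  ring

lemma T_hom {a b : ℝ} (c : ℝ) (hc : 0 ≤ c) (ha : 0 ≤ a) (hb : 0 ≤ b) :
    T (c * a) (c * b) = c * T a b := by
  unfold T
  rw [← mul_add, phi_mul hc (add_nonneg ha hb), phi_mul hc ha, phi_mul hc hb]
  ring

lemma phi_le {a s : ℝ} (ha : 0 ≤ a) (has : a ≤ s) : phi a ≤ a * Real.logb 2 s := by
  rcases eq_or_lt_of_le ha with h | h
  · simp [phi, ← h]
  · exact mul_le_mul_of_nonneg_left (Real.logb_le_logb_of_le one_lt_two h has) ha

lemma T_nonneg {a b : ℝ} (ha : 0 ≤ a) (hb : 0 ≤ b) : 0 ≤ T a b := by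
  have h1 := phi_le ha (le_add_of_nonneg_right hb (a := a))
  have h2 := phi_le hb (le_add_of_nonneg_left ha (a := b))
  unfold T phi
  unfold phi at h1 h2
  nlinarith [h1, h2]

lemma T_pos {a b : ℝ} (ha : 0 < a) (hb : 0 < b) : 0 < T a b := by
  have h1 : phi a < a * Real.logb 2 (a + b) :=
    mul_lt_mul_of_pos_left (Real.logb_lt_logb one_lt_two ha (by linarith)) ha
  have h2 : phi b < b * Real.logb 2 (a + b) :=
    mul_lt_mul_of_pos_left (Real.logb_lt_logb one_lt_two hb (by linarith)) hb
  unfold T phi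
  unfold phi at h1 h2
  nlinarith [h1, h2]

lemma phi_half (s : ℝ) (hs : 0 ≤ s) : phi s = 2 * phi (s / 2) + s := by
  have : s = 2 * (s / 2) := by ring
  calc phi s = phi (2 * (s/2)) := by rw [← this]
    _ = 2 * phi (s/2) + (s/2) * phi 2 := phi_mul (by norm_num) (by linarith)
    _ = 2 * phi (s/2) + s := by rw [phi_two]; ring

lemma T_le {a b : ℝ} (ha : 0 ≤ a) (hb : 0 ≤ b) : T a b ≤ a + b := by
  have hmid : phi ((a + b)/2) ≤ (phi a + phi b)/2 := by
    have h := phi_scvx.convexOn.2 (Set.mem_Ici.2 ha) (Set.mem_Ici.2 hb)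
      (by norm_num : (0:ℝ) ≤ 1/2) (by norm_num : (0:ℝ) ≤ 1/2) (by norm_num)
    simp only [smul_eq_mul] at h
    calc phi ((a+b)/2) = phi (1/2 * a + 1/2 * b) := by ring_nf
      _ ≤ 1/2 * phi a + 1/2 * phi b := h
      _ = (phi a + phi b)/2 := by ring
  have hs := phi_half (a + b) (by linarith)
  unfold T
  linarith

lemma T_lt {a b : ℝ} (ha : 0 ≤ a) (hb : 0 ≤ b) (hne : a ≠ b) : T a b < a + b := by
  have hmid : phi ((a + b)/2) < (phi a + phi b)/2 := by
    have h := phi_scvx.2 (Set.mem_Ici.2 ha) (Set.mem_Ici.2 hb) hne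
      (by norm_num : (0:ℝ) < 1/2) (by norm_num : (0:ℝ) < 1/2) (by norm_num)
    simp only [smul_eq_mul] at h
    calc phi ((a+b)/2) = phi (1/2 * a + 1/2 * b) := by ring_nf
      _ < 1/2 * phi a + 1/2 * phi b := h
      _ = (phi a + phi b)/2 := by ring
  have hs := phi_half (a + b) (by linarith)
  unfold T
  linarith








lemma H_scc : StrictConcaveOn ℝ (Set.Icc (0:ℝ) 1) (fun t => T t (1 - t)) := by
  refine ⟨convex_Icc 0 1, fun x hx y hy hxy a b ha hb hab => ?_⟩
  have h1 : phi (a * x + b * y) < a * phi x + b * phi y := by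
    have := phi_scvx.2 (Set.mem_Ici.2 hx.1) (Set.mem_Ici.2 hy.1) hxy ha hb hab
    simpa [smul_eq_mul] using this
  have h2 : phi (1 - (a * x + b * y)) < a * phi (1 - x) + b * phi (1 - y) := by
    have he : 1 - (a * x + b * y) = a * (1 - x) + b * (1 - y) := by
      have : a + b = 1 := hab
      ring_nf
      linarith [mul_comm a x, mul_comm b y]
    have := phi_scvx.2 (Set.mem_Ici.2 (by linarith [hx.2] : (0:ℝ) ≤ 1 - x))
      (Set.mem_Ici.2 (by linarith [hy.2] : (0:ℝ) ≤ 1 - y))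
      (by intro h; exact hxy (by linarith)) ha hb hab
    simp only [smul_eq_mul] at this
    rw [he]
    exact this
  simp only [smul_eq_mul]
  unfold T
  have hphi1 : phi 1 = 0 := by simp [phi]
  have e1 : x + (1 - x) = 1 := by ring
  have e2 : y + (1 - y) = 1 := by ring
  have e3 : a * x + b * y + (1 - (a * x + b * y)) = 1 := by ring
  rw [e1, e2, e3, hphi1]
  linarith

lemma T_scale {u v : ℝ} (hu : 0 ≤ u) (hv : 0 ≤ v) (hs : 0 < u + v) :
    T u v = (u + v) * T (u / (u + v)) (1 - u / (u + v)) := by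
  have h1 : (1:ℝ) - u / (u + v) = v / (u + v) := by field_simp; ring
  rw [h1, ← T_hom (u + v) hs.le (div_nonneg hu hs.le) (div_nonneg hv hs.le)]
  congr 1 <;> field_simp

lemma mem_Icc_div {u v : ℝ} (hu : 0 ≤ u) (hv : 0 ≤ v) (hs : 0 < u + v) :
    u / (u + v) ∈ Set.Icc (0:ℝ) 1 :=
  ⟨div_nonneg hu hs.le, by rw [div_le_one hs]; linarith⟩

lemma T_superadd {u₁ v₁ u₂ v₂ : ℝ} (hu₁ : 0 ≤ u₁) (hv₁ : 0 ≤ v₁)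
    (hu₂ : 0 ≤ u₂) (hv₂ : 0 ≤ v₂) :
    T u₁ v₁ + T u₂ v₂ ≤ T (u₁ + u₂) (v₁ + v₂) := by
  rcases eq_or_lt_of_le (add_nonneg hu₁ hv₁) with h1 | h1
  · have e1 : u₁ = 0 := by linarith
    have e2 : v₁ = 0 := by linarith
    simp [e1, e2, T_zero_left]
  rcases eq_or_lt_of_le (add_nonneg hu₂ hv₂) with h2 | h2
  · have e1 : u₂ = 0 := by linarith
    have e2 : v₂ = 0 := by linarith
    simp [e1, e2, T_zero_left]
  have hs : 0 < (u₁ + u₂) + (v₁ + v₂) := by linarith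
  set f : ℝ → ℝ := fun t => T t (1 - t) with hf
  have hconc := H_scc.concaveOn.2 (mem_Icc_div hu₁ hv₁ h1) (mem_Icc_div hu₂ hv₂ h2)
    (div_nonneg h1.le hs.le : 0 ≤ (u₁ + v₁) / ((u₁ + u₂) + (v₁ + v₂)))
    (div_nonneg h2.le hs.le : 0 ≤ (u₂ + v₂) / ((u₁ + u₂) + (v₁ + v₂))) (by field_simp; ring)
  simp only [smul_eq_mul] at hconc
  have hpt : (u₁ + v₁) / ((u₁ + u₂) + (v₁ + v₂)) * (u₁ / (u₁ + v₁))
      + (u₂ + v₂) / ((u₁ + u₂) + (v₁ + v₂)) * (u₂ / (u₂ + v₂))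
      = (u₁ + u₂) / ((u₁ + u₂) + (v₁ + v₂)) := by
    field_simp
  rw [hpt] at hconc
  rw [T_scale hu₁ hv₁ h1, T_scale hu₂ hv₂ h2,
    T_scale (add_nonneg hu₁ hu₂) (add_nonneg hv₁ hv₂) hs]
  have hmul := mul_le_mul_of_nonneg_left hconc hs.le
  calc (u₁ + v₁) * f (u₁ / (u₁ + v₁)) + (u₂ + v₂) * f (u₂ / (u₂ + v₂))
      = ((u₁ + u₂) + (v₁ + v₂)) * ((u₁ + v₁) / ((u₁ + u₂) + (v₁ + v₂)) * f (u₁ / (u₁ + v₁))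
        + (u₂ + v₂) / ((u₁ + u₂) + (v₁ + v₂)) * f (u₂ / (u₂ + v₂))) := by
        field_simp
    _ ≤ ((u₁ + u₂) + (v₁ + v₂)) * f ((u₁ + u₂) / ((u₁ + u₂) + (v₁ + v₂))) := hmul

lemma T_superadd_strict {u₁ v₁ u₂ v₂ : ℝ} (hu₁ : 0 ≤ u₁) (hv₁ : 0 ≤ v₁)
    (hu₂ : 0 ≤ u₂) (hv₂ : 0 ≤ v₂) (h1 : 0 < u₁ + v₁) (h2 : 0 < u₂ + v₂)
    (hne : u₁ * v₂ ≠ u₂ * v₁) :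
    T u₁ v₁ + T u₂ v₂ < T (u₁ + u₂) (v₁ + v₂) := by
  have hs : 0 < (u₁ + u₂) + (v₁ + v₂) := by linarith
  set f : ℝ → ℝ := fun t => T t (1 - t) with hf
  have htne : u₁ / (u₁ + v₁) ≠ u₂ / (u₂ + v₂) := by
    intro h
    apply hne
    have := (div_eq_div_iff h1.ne' h2.ne').1 h
    nlinarith [this]
  have hconc := H_scc.2 (mem_Icc_div hu₁ hv₁ h1) (mem_Icc_div hu₂ hv₂ h2) htne
    (div_pos h1 hs : 0 < (u₁ + v₁) / ((u₁ + u₂) + (v₁ + v₂)))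
    (div_pos h2 hs : 0 < (u₂ + v₂) / ((u₁ + u₂) + (v₁ + v₂))) (by field_simp; ring)
  simp only [smul_eq_mul] at hconc
  have hpt : (u₁ + v₁) / ((u₁ + u₂) + (v₁ + v₂)) * (u₁ / (u₁ + v₁))
      + (u₂ + v₂) / ((u₁ + u₂) + (v₁ + v₂)) * (u₂ / (u₂ + v₂))
      = (u₁ + u₂) / ((u₁ + u₂) + (v₁ + v₂)) := by
    field_simp
  rw [hpt] at hconc
  rw [T_scale hu₁ hv₁ h1, T_scale hu₂ hv₂ h2,
    T_scale (add_nonneg hu₁ hu₂) (add_nonneg hv₁ hv₂) hs]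
  have hmul := mul_lt_mul_of_pos_left hconc hs
  calc (u₁ + v₁) * f (u₁ / (u₁ + v₁)) + (u₂ + v₂) * f (u₂ / (u₂ + v₂))
      = ((u₁ + u₂) + (v₁ + v₂)) * ((u₁ + v₁) / ((u₁ + u₂) + (v₁ + v₂)) * f (u₁ / (u₁ + v₁))
        + (u₂ + v₂) / ((u₁ + u₂) + (v₁ + v₂)) * f (u₂ / (u₂ + v₂))) := by
        field_simp
    _ < ((u₁ + u₂) + (v₁ + v₂)) * f ((u₁ + u₂) / ((u₁ + u₂) + (v₁ + v₂))) := hmul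







/-- The chain-rule identity. -/
lemma T_chain {a₁ b₁ a₂ b₂ : ℝ} (ha₁ : 0 ≤ a₁) (hb₁ : 0 ≤ b₁) (ha₂ : 0 ≤ a₂) (hb₂ : 0 ≤ b₂) :
    T (a₁ * a₂) (b₁ * b₂) + T (b₁ * a₂) (a₁ * b₂)
      + T (b₁ * a₂ + a₁ * b₂) (a₁ * a₂ + b₁ * b₂)
    = (a₂ + b₂) * T a₁ b₁ + (a₁ + b₁) * T a₂ b₂ := by
  have e : b₁ * a₂ + a₁ * b₂ + (a₁ * a₂ + b₁ * b₂) = (a₁ + b₁) * (a₂ + b₂) := by ring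
  unfold T
  rw [e, phi_mul (add_nonneg ha₁ hb₁) (add_nonneg ha₂ hb₂), phi_mul ha₁ ha₂,
    phi_mul hb₁ hb₂, phi_mul hb₁ ha₂, phi_mul ha₁ hb₂]
  ring

lemma T_key1 {a₁ b₁ a₂ b₂ : ℝ} (ha₁ : 0 ≤ a₁) (hb₁ : 0 ≤ b₁) (ha₂ : 0 ≤ a₂) (hb₂ : 0 ≤ b₂) :
    (a₂ + b₂) * T a₁ b₁ ≤ T (b₁ * a₂ + a₁ * b₂) (a₁ * a₂ + b₁ * b₂) := by
  have h := T_superadd (mul_nonneg hb₁ ha₂) (mul_nonneg ha₁ ha₂)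
    (mul_nonneg ha₁ hb₂) (mul_nonneg hb₁ hb₂)
  have e1 : T (b₁ * a₂) (a₁ * a₂) = a₂ * T a₁ b₁ := by
    rw [mul_comm b₁ a₂, mul_comm a₁ a₂, T_hom a₂ ha₂ hb₁ ha₁, T_comm]
  have e2 : T (a₁ * b₂) (b₁ * b₂) = b₂ * T a₁ b₁ := by
    rw [mul_comm a₁ b₂, mul_comm b₁ b₂, T_hom b₂ hb₂ ha₁ hb₁]
  have e3 : T (b₁ * a₂ + a₁ * b₂) (a₁ * a₂ + b₁ * b₂) = T (b₁ * a₂ + a₁ * b₂) (a₁ * a₂ + b₁ * b₂) := rfl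
  rw [e1, e2] at h
  linarith [h]

lemma T_key2 {a₁ b₁ a₂ b₂ : ℝ} (ha₁ : 0 ≤ a₁) (hb₁ : 0 ≤ b₁) (ha₂ : 0 ≤ a₂) (hb₂ : 0 ≤ b₂) :
    (a₁ + b₁) * T a₂ b₂ ≤ T (b₁ * a₂ + a₁ * b₂) (a₁ * a₂ + b₁ * b₂) := by
  have h := T_superadd (mul_nonneg hb₁ ha₂) (mul_nonneg hb₁ hb₂)
    (mul_nonneg ha₁ hb₂) (mul_nonneg ha₁ ha₂)
  have e1 : T (b₁ * a₂) (b₁ * b₂) = b₁ * T a₂ b₂ := T_hom b₁ hb₁ ha₂ hb₂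
  have e2 : T (a₁ * b₂) (a₁ * a₂) = a₁ * T a₂ b₂ := by
    rw [T_hom a₁ ha₁ hb₂ ha₂, T_comm]
  rw [e1, e2] at h
  have e3 : T (b₁ * a₂ + a₁ * b₂) (b₁ * b₂ + a₁ * a₂)
      = T (b₁ * a₂ + a₁ * b₂) (a₁ * a₂ + b₁ * b₂) := by rw [add_comm (b₁ * b₂)]
  rw [e3] at h
  linarith [h]

lemma T_diag {a b : ℝ} (ha : 0 ≤ a) (hb : 0 ≤ b)
    (h : T (b * a + a * b) (a * a + b * b) = (a + b) * T a b) :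
    a = 0 ∨ b = 0 ∨ a = b := by
  by_contra hcon
  push_neg at hcon
  obtain ⟨ha0, hb0, hab⟩ := hcon
  have hap : 0 < a := lt_of_le_of_ne ha (Ne.symm ha0)
  have hbp : 0 < b := lt_of_le_of_ne hb (Ne.symm hb0)
  have heq : (a + b) * T a b = T (b * a) (a * a) + T (a * b) (b * b) := by
    have e1 : T (b * a) (a * a) = a * T a b := by
      rw [mul_comm b a, mul_comm a a, T_hom a ha hb ha, T_comm]
    have e2 : T (a * b) (b * b) = b * T a b := by
      rw [mul_comm a b, mul_comm b b, T_hom b hb ha hb]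
    rw [e1, e2]; ring
  have hne : b * a * (b * b) ≠ a * b * (a * a) := by
    intro hx
    apply hab
    have h1 : a * b * (b * b - a * a) = 0 := by nlinarith [hx]
    have h2 : b * b - a * a = 0 := by
      rcases mul_eq_zero.1 h1 with h | h
      · exact absurd h (by positivity)
      · exact h
    have h3 : (b - a) * (b + a) = 0 := by nlinarith [h2]
    rcases mul_eq_zero.1 h3 with h | h
    · linarith
    · linarith
  have hlt := T_superadd_strict (mul_nonneg hb ha) (mul_nonneg ha ha)
    (mul_nonneg ha hb) (mul_nonneg hb hb) (by nlinarith) (by nlinarith) hne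
  rw [heq] at h
  linarith [hlt, h.symm.le, h.le]

/-- the bridge between `condEnt`'s summand and `T`. -/
lemma neg_term_eq {a b : ℝ} (ha : 0 ≤ a) (hb : 0 ≤ b) :
    -(a * Real.logb 2 (a / (a + b))) + -(b * Real.logb 2 (b / (a + b))) = T a b := by
  rcases eq_or_lt_of_le (add_nonneg ha hb) with hs | hs
  · have e1 : a = 0 := by linarith
    have e2 : b = 0 := by linarith
    simp [e1, e2, T, phi_zero]
  have key : ∀ x : ℝ, 0 ≤ x → x * Real.logb 2 (x / (a + b)) = phi x - x * Real.logb 2 (a + b) := by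
    intro x hx
    rcases eq_or_lt_of_le hx with h | h
    · simp [← h, phi_zero]
    · rw [Real.logb_div h.ne' hs.ne']
      unfold phi
      ring
  rw [key a ha, key b hb]
  unfold T phi
  ring







lemma condEnt_eq {β : Type*} (q : Bool → β → ℝ) (hq : ∀ x y, 0 ≤ q x y) :
    condEnt q = ∑' y, T (q true y) (q false y) := by
  unfold condEnt
  refine tsum_congr fun y => ?_
  rw [Fintype.sum_bool]
  rw [show (∑ x' : Bool, q x' y) = q true y + q false y from Fintype.sum_bool _]
  exact neg_term_eq (hq true y) (hq false y)

noncomputable def mF (p : Bool → ℕ → ℝ) (y : ℕ) : ℝ := p true y + p false y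
noncomputable def gF (p : Bool → ℕ → ℝ) (y : ℕ) : ℝ := T (p true y) (p false y)
noncomputable def GF (p : Bool → ℕ → ℝ) (v : ℕ × ℕ) : ℝ :=
  T (p false v.1 * p true v.2 + p true v.1 * p false v.2)
    (p true v.1 * p true v.2 + p false v.1 * p false v.2)

end PolarAux

open PolarAux

set_option maxHeartbeats 2000000 in
/-- Equality holds in the polarization inequalities iff `H(X|Y) ∈ {0,1}`,
for `U₁ = X₁ ⊕ X₂` and `U₂ = X₂`. -/
theorem stmt2 (p : Bool → ℕ → ℝ) (hp : ∀ x y, 0 ≤ p x y)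
    (hsum : HasSum (fun z : Bool × ℕ => p z.1 z.2) 1) :
    (condEnt (fun (u₁ : Bool) (y : ℕ × ℕ) =>
        ∑ x₂ : Bool, p (xor u₁ x₂) y.1 * p x₂ y.2) = condEnt p ↔
      condEnt p = 0 ∨ condEnt p = 1) ∧
    (condEnt (fun (u₂ : Bool) (w : ℕ × ℕ × Bool) =>
        p (xor w.2.2 u₂) w.1 * p u₂ w.2.1) = condEnt p ↔
      condEnt p = 0 ∨ condEnt p = 1) := by
  classical
  have hmnn : ∀ y, 0 ≤ mF p y := fun y => add_nonneg (hp true y) (hp false y)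
  have hple : ∀ x y, p x y ≤ mF p y := by
    intro x y
    cases x
    · exact le_add_of_nonneg_left (hp true y)
    · exact le_add_of_nonneg_right (hp false y)
  have hgnn : ∀ y, 0 ≤ gF p y := fun y => T_nonneg (hp true y) (hp false y)
  have hgle : ∀ y, gF p y ≤ mF p y := fun y => T_le (hp true y) (hp false y)
  -- summability of marginals
  have hPs : Summable (fun z : Bool × ℕ => p z.1 z.2) := hsum.summable
  have hpa : Summable (fun y => p true y) :=
    hPs.comp_injective (fun y₁ y₂ h => by simpa using h : Function.Injective fun y : ℕ => ((true : Bool), y))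
  have hpb : Summable (fun y => p false y) :=
    hPs.comp_injective (fun y₁ y₂ h => by simpa using h : Function.Injective fun y : ℕ => ((false : Bool), y))
  have hm : Summable (mF p) := hpa.add hpb
  have hm1 : ∑' y, mF p y = 1 := by
    have hps := hsum.tsum_eq
    rw [Summable.tsum_prod' hPs (fun x => hPs.prod_factor x), tsum_bool] at hps
    unfold mF
    rw [Summable.tsum_add hpa hpb]
    linarith [hps]
  have hg : Summable (gF p) := Summable.of_nonneg_of_le hgnn hgle hm
  have hcp : condEnt p = ∑' y, gF p y := condEnt_eq p hp
  -- product-level summability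
  have hM : Summable (fun v : ℕ × ℕ => mF p v.1 * mF p v.2) :=
    hm.mul_of_nonneg hm hmnn hmnn
  have hM1 : ∑' v : ℕ × ℕ, mF p v.1 * mF p v.2 = 1 := by
    rw [Summable.tsum_prod' hM (fun x => hM.prod_factor x)]
    calc ∑' y₁, ∑' y₂, mF p y₁ * mF p y₂ = ∑' y₁, mF p y₁ * ∑' y₂, mF p y₂ :=
          tsum_congr fun y₁ => tsum_mul_left
      _ = 1 := by rw [hm1]; simpa using hm1
  have hGnn : ∀ v, 0 ≤ GF p v := fun v =>
    T_nonneg (add_nonneg (mul_nonneg (hp false v.1) (hp true v.2))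
        (mul_nonneg (hp true v.1) (hp false v.2)))
      (add_nonneg (mul_nonneg (hp true v.1) (hp true v.2))
        (mul_nonneg (hp false v.1) (hp false v.2)))
  have hGle : ∀ v, GF p v ≤ mF p v.1 * mF p v.2 := by
    intro v
    refine le_trans (T_le (add_nonneg (mul_nonneg (hp false v.1) (hp true v.2))
        (mul_nonneg (hp true v.1) (hp false v.2)))
      (add_nonneg (mul_nonneg (hp true v.1) (hp true v.2))
        (mul_nonneg (hp false v.1) (hp false v.2)))) ?_
    unfold mF
    nlinarith [hp true v.1, hp false v.1, hp true v.2, hp false v.2]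
  have hG : Summable (GF p) := Summable.of_nonneg_of_le hGnn hGle hM
  have hA1 : Summable (fun v : ℕ × ℕ => gF p v.1 * mF p v.2) :=
    hg.mul_of_nonneg hm hgnn hmnn
  have hA2 : Summable (fun v : ℕ × ℕ => mF p v.1 * gF p v.2) :=
    hm.mul_of_nonneg hg hmnn hgnn
  have hA1t : ∑' v : ℕ × ℕ, gF p v.1 * mF p v.2 = ∑' y, gF p y := by
    rw [Summable.tsum_prod' hA1 (fun x => hA1.prod_factor x)]
    calc ∑' y₁, ∑' y₂, gF p y₁ * mF p y₂ = ∑' y₁, gF p y₁ * ∑' y₂, mF p y₂ :=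
          tsum_congr fun y₁ => tsum_mul_left
      _ = ∑' y, gF p y := by rw [hm1]; simp
  have hA2t : ∑' v : ℕ × ℕ, mF p v.1 * gF p v.2 = ∑' y, gF p y := by
    rw [Summable.tsum_prod' hA2 (fun x => hA2.prod_factor x)]
    calc ∑' y₁, ∑' y₂, mF p y₁ * gF p y₂ = ∑' y₁, mF p y₁ * ∑' y₂, gF p y₂ :=
          tsum_congr fun y₁ => tsum_mul_left
      _ = (∑' y, mF p y) * ∑' y, gF p y := tsum_mul_right
      _ = ∑' y, gF p y := by rw [hm1, one_mul]
  -- identification of condEnt q₁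
  have hcq1 : condEnt (fun (u₁ : Bool) (y : ℕ × ℕ) =>
      ∑ x₂ : Bool, p (xor u₁ x₂) y.1 * p x₂ y.2) = ∑' v, GF p v := by
    rw [condEnt_eq _ (fun x y => Finset.sum_nonneg fun i _ => mul_nonneg (hp _ _) (hp _ _))]
    refine tsum_congr fun v => ?_
    unfold GF
    rw [Fintype.sum_bool, Fintype.sum_bool]
    norm_num
  -- the central equivalence
  have key : (∑' v, GF p v = ∑' y, gF p y) ↔ (∑' y, gF p y = 0 ∨ ∑' y, gF p y = 1) := by
    constructor
    · intro hEq
      have hDnn : ∀ v : ℕ × ℕ,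
          0 ≤ GF p v - (gF p v.1 * mF p v.2 + mF p v.1 * gF p v.2) / 2 := by
        intro v
        have h1 := T_key1 (hp true v.1) (hp false v.1) (hp true v.2) (hp false v.2)
        have h2 := T_key2 (hp true v.1) (hp false v.1) (hp true v.2) (hp false v.2)
        unfold GF gF mF
        unfold GF at h1 h2
        linarith [h1, h2]
      have hAsum : Summable (fun v : ℕ × ℕ =>
          (gF p v.1 * mF p v.2 + mF p v.1 * gF p v.2) / 2) := (hA1.add hA2).div_const 2
      have hDsum : Summable (fun v : ℕ × ℕ =>
          GF p v - (gF p v.1 * mF p v.2 + mF p v.1 * gF p v.2) / 2) := hG.sub hAsum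
      have hDt : ∑' v : ℕ × ℕ,
          (GF p v - (gF p v.1 * mF p v.2 + mF p v.1 * gF p v.2) / 2) = 0 := by
        rw [Summable.tsum_sub hG hAsum, tsum_div_const, Summable.tsum_add hA1 hA2, hA1t, hA2t, hEq]
        ring
      have hD0 : ∀ v : ℕ × ℕ,
          GF p v = (gF p v.1 * mF p v.2 + mF p v.1 * gF p v.2) / 2 := by
        intro v
        have hle := Summable.le_tsum hDsum v (fun j _ => hDnn j)
        rw [hDt] at hle
        have := hDnn v
        linarith
      have key0 : ∀ y, 0 < mF p y → gF p y = 0 ∨ gF p y = mF p y := by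
        intro y hy
        have hd := hD0 (y, y)
        have hd2 : (gF p y * mF p y + mF p y * gF p y) / 2 = (p true y + p false y) * T (p true y) (p false y) := by
          unfold gF mF; ring
        rw [hd2] at hd
        have hd' : T (p false y * p true y + p true y * p false y)
            (p true y * p true y + p false y * p false y)
            = (p true y + p false y) * T (p true y) (p false y) := hd
        rcases T_diag (hp true y) (hp false y) hd' with h | h | h
        · left; unfold gF; rw [h, T_zero_left]
        · left; unfold gF; rw [h, T_zero_right]
        · right; unfold gF mF; rw [h, T_self (hp false y)]; ring
      by_cases hex : ∃ y₀, 0 < mF p y₀ ∧ gF p y₀ = mF p y₀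
      · right
        obtain ⟨y₀, hy₀, hgy₀⟩ := hex
        have haeq : p true y₀ = p false y₀ := by
          by_contra hne
          exact absurd hgy₀ (ne_of_lt (T_lt (hp true y₀) (hp false y₀) hne))
        have hap : 0 < p true y₀ := by
          have : mF p y₀ = p true y₀ + p false y₀ := rfl
          rw [this, ← haeq] at hy₀
          linarith
        have hall : ∀ y, gF p y = mF p y := by
          intro y
          have hd := hD0 (y₀, y)
          have hc1 : p false y₀ * p true y + p true y₀ * p false y = p true y₀ * mF p y := by
            rw [← haeq]; unfold mF; ring
          have hc2 : p true y₀ * p true y + p false y₀ * p false y = p true y₀ * mF p y := by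
            rw [← haeq]; unfold mF; ring
          unfold GF at hd
          rw [hc1, hc2, T_self (mul_nonneg hap.le (hmnn y)), hgy₀] at hd
          have hm0 : mF p y₀ = 2 * p true y₀ := by
            unfold mF; rw [← haeq]; ring
          rw [hm0] at hd
          have hmul : p true y₀ * mF p y = p true y₀ * gF p y := by linarith
          have := mul_left_cancel₀ (ne_of_gt hap) hmul
          linarith
        rw [tsum_congr hall, hm1]
      · left
        have hall : ∀ y, gF p y = 0 := by
          intro y
          rcases eq_or_lt_of_le (hmnn y) with h | h
          · have ha0 : p true y = 0 := by
              have h1 := hp true y; have h2 := hp false y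
              have : p true y + p false y = 0 := by
                have := h.symm; unfold mF at this; linarith
              linarith
            unfold gF; rw [ha0, T_zero_left]
          · rcases key0 y h with h0 | h0
            · exact h0
            · exact absurd ⟨y, h, h0⟩ hex
        rw [tsum_congr hall]
        exact tsum_zero
    · intro h
      rcases h with h | h
      · -- g ≡ 0
        have hall : ∀ y, gF p y = 0 := fun y =>
          le_antisymm (by rw [← h]; exact Summable.le_tsum hg y fun j _ => hgnn j) (hgnn y)
        have hor : ∀ y, p true y = 0 ∨ p false y = 0 := by
          intro y
          by_contra hc
          push_neg at hc
          have hpos := T_pos (lt_of_le_of_ne (hp true y) (Ne.symm hc.1))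
            (lt_of_le_of_ne (hp false y) (Ne.symm hc.2))
          have := hall y
          unfold gF at this
          linarith
        have hG0 : ∀ v, GF p v = 0 := by
          intro v
          unfold GF
          rcases hor v.1 with h1 | h1 <;> rcases hor v.2 with h2 | h2 <;>
            simp [h1, h2, T_zero_left, T_zero_right]
        rw [tsum_congr hG0, tsum_zero, h]
      · -- g ≡ m
        have hmg : ∀ y, gF p y = mF p y := by
          have hsub : Summable (fun y => mF p y - gF p y) := hm.sub hg
          have ht : ∑' y, (mF p y - gF p y) = 0 := by
            rw [Summable.tsum_sub hm hg, hm1, h]; ring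
          intro y
          have hle := Summable.le_tsum hsub y (fun j _ => by have := hgle j; linarith)
          rw [ht] at hle
          have := hgle y
          linarith
        have hab : ∀ y, p true y = p false y := by
          intro y
          by_contra hne
          have hlt := T_lt (hp true y) (hp false y) hne
          have := hmg y
          unfold gF mF at this
          linarith
        have hGM : ∀ v, GF p v = mF p v.1 * mF p v.2 := by
          intro v
          unfold GF
          rw [← hab v.1, ← hab v.2]
          rw [T_self (add_nonneg (mul_nonneg (hp true v.1) (hp true v.2)) (mul_nonneg (hp true v.1) (hp true v.2)))]
          unfold mF
          rw [← hab v.1, ← hab v.2]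
          ring
        calc ∑' v, GF p v = ∑' v : ℕ × ℕ, mF p v.1 * mF p v.2 := tsum_congr hGM
          _ = 1 := hM1
          _ = ∑' y, gF p y := h.symm
  -- part 2: chain rule
  have hq2nn : ∀ (x : Bool) (w : ℕ × ℕ × Bool),
      0 ≤ p (xor w.2.2 x) w.1 * p x w.2.1 := fun x w => mul_nonneg (hp _ _) (hp _ _)
  have hcq2 : condEnt (fun (u₂ : Bool) (w : ℕ × ℕ × Bool) =>
      p (xor w.2.2 u₂) w.1 * p u₂ w.2.1)
      = ∑' w : ℕ × ℕ × Bool,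
        T (p (xor w.2.2 true) w.1 * p true w.2.1) (p (xor w.2.2 false) w.1 * p false w.2.1) :=
    condEnt_eq _ hq2nn
  have he : ∑' v : (ℕ × ℕ) × Bool,
      T (p (xor v.2 true) v.1.1 * p true v.1.2) (p (xor v.2 false) v.1.1 * p false v.1.2)
      = ∑' w : ℕ × ℕ × Bool,
        T (p (xor w.2.2 true) w.1 * p true w.2.1) (p (xor w.2.2 false) w.1 * p false w.2.1) :=
    (Equiv.prodAssoc ℕ ℕ Bool).tsum_eq (fun w : ℕ × ℕ × Bool =>
      T (p (xor w.2.2 true) w.1 * p true w.2.1) (p (xor w.2.2 false) w.1 * p false w.2.1))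
  have hF'nn : ∀ v : (ℕ × ℕ) × Bool,
      0 ≤ T (p (xor v.2 true) v.1.1 * p true v.1.2) (p (xor v.2 false) v.1.1 * p false v.1.2) :=
    fun v => T_nonneg (mul_nonneg (hp _ _) (hp _ _)) (mul_nonneg (hp _ _) (hp _ _))
  have hF'le : ∀ v : (ℕ × ℕ) × Bool,
      T (p (xor v.2 true) v.1.1 * p true v.1.2) (p (xor v.2 false) v.1.1 * p false v.1.2)
      ≤ mF p v.1.1 * mF p v.1.2 := by
    intro v
    refine le_trans (T_le (mul_nonneg (hp _ _) (hp _ _)) (mul_nonneg (hp _ _) (hp _ _))) ?_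
    calc p (xor v.2 true) v.1.1 * p true v.1.2 + p (xor v.2 false) v.1.1 * p false v.1.2
        ≤ mF p v.1.1 * p true v.1.2 + mF p v.1.1 * p false v.1.2 :=
          add_le_add (mul_le_mul_of_nonneg_right (hple _ _) (hp _ _))
            (mul_le_mul_of_nonneg_right (hple _ _) (hp _ _))
      _ = mF p v.1.1 * mF p v.1.2 := by unfold mF; ring
  have hMB : Summable (fun v : (ℕ × ℕ) × Bool => mF p v.1.1 * mF p v.1.2) := by
    have h1 : Summable (fun v : (ℕ × ℕ) × Bool =>
        (mF p v.1.1 * mF p v.1.2) * (fun _ : Bool => (1:ℝ)) v.2) :=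
      hM.mul_of_nonneg ((hasSum_fintype (fun _ : Bool => (1:ℝ))).summable)
        (fun v => mul_nonneg (hmnn _) (hmnn _)) (fun _ => zero_le_one)
    simpa using h1
  have hF' : Summable (fun v : (ℕ × ℕ) × Bool =>
      T (p (xor v.2 true) v.1.1 * p true v.1.2) (p (xor v.2 false) v.1.1 * p false v.1.2)) :=
    Summable.of_nonneg_of_le hF'nn hF'le hMB
  have hsplit : ∑' v : (ℕ × ℕ) × Bool,
      T (p (xor v.2 true) v.1.1 * p true v.1.2) (p (xor v.2 false) v.1.1 * p false v.1.2)
      = ∑' y : ℕ × ℕ,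
        (T (p true y.1 * p true y.2) (p false y.1 * p false y.2)
          + T (p false y.1 * p true y.2) (p true y.1 * p false y.2)) := by
    rw [Summable.tsum_prod' hF' (fun y => hF'.prod_factor y)]
    refine tsum_congr fun y => ?_
    rw [tsum_bool]
    norm_num
  have hchain : ∀ y : ℕ × ℕ,
      T (p true y.1 * p true y.2) (p false y.1 * p false y.2)
        + T (p false y.1 * p true y.2) (p true y.1 * p false y.2)
      = (gF p y.1 * mF p y.2 + mF p y.1 * gF p y.2) - GF p y := by
    intro y
    have hc := T_chain (hp true y.1) (hp false y.1) (hp true y.2) (hp false y.2)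
    unfold GF gF mF
    linarith [hc]
  have hKsum : Summable (fun y : ℕ × ℕ =>
      (gF p y.1 * mF p y.2 + mF p y.1 * gF p y.2) - GF p y) := (hA1.add hA2).sub hG
  have hq2t : condEnt (fun (u₂ : Bool) (w : ℕ × ℕ × Bool) =>
      p (xor w.2.2 u₂) w.1 * p u₂ w.2.1)
      = 2 * (∑' y, gF p y) - ∑' v, GF p v := by
    rw [hcq2, ← he, hsplit, tsum_congr hchain,
      Summable.tsum_sub (hA1.add hA2) hG, Summable.tsum_add hA1 hA2, hA1t, hA2t]
    ring
  -- assemble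
  constructor
  · rw [hcq1, hcp]
    exact key
  · rw [hq2t, hcp]
    constructor
    · intro h
      exact key.1 (by linarith)
    · intro h
      have := key.2 h
      linarith
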